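/- Let w be a word of length n, H the Parikh vector of w[1..h], P the Parikh vector of w[h+1..h+p], and i = h + kp with k > 0 and p ≤ n - i, such that (h,p) is an Abelian period of w[1..i] with empty tail. Then (h,p) is an Abelian period of w[1..i+p] (with empty tail) if and only if for every letter a, the position of the (H[a] + (1 + ⌊i/p⌋)·P[a])-th occurrence of a in w exists and is at most i + p. -/
import Mathlib


/-- A word `u` has Abelian period `(h, p)` **with empty tail** if `u = u₀u₁⋯u_k`
where `|u₀| = h`, all the blocks `u₁, …, u_k` (at least one) have length `p` and the
same Parikh vector, and the Parikh vector of `u₀` is contained in that of `u₁`. -/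
def HasAbelianPeriodEmptyTail {α : Type*} [DecidableEq α] (u : List α) (h p : ℕ) : Prop :=
  ∃ (u0 : List α) (us : List (List α)),
    u = u0 ++ us.flatten ∧
    u0.length = h ∧
    us ≠ [] ∧
    (∀ v ∈ us, v.length = p) ∧
    (∀ v ∈ us, ∀ v' ∈ us, ∀ a : α, v.count a = v'.count a) ∧
    (∀ v ∈ us, ∀ a : α, u0.count a ≤ v.count a)

/-- Let `w` be a word of length `n`, `H` the Parikh vector of `w[1..h]`,
`P` the Parikh vector of `w[h+1..h+p]`, and `i = h + kp` with `k > 0`, `h < p`, and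
`i + p ≤ n`, such that `(h, p)` is an Abelian period of `w[1..i]` with empty tail.
Then `(h, p)` is an Abelian period of `w[1..i+p]` with empty tail iff for every letter
`a` the `(H[a] + (1 + ⌊i/p⌋)·P[a])`-th occurrence of `a` in `w` exists and its position
is at most `i + p`; equivalently, the prefix of `w` of length `i + p` contains at least
`H[a] + (1 + ⌊i/p⌋)·P[a]` occurrences of `a`. -/
lemma abelian_aux {α : Type*} [DecidableEq α] (w : List α) (h p m : ℕ)
    (hp0 : 0 < p) (hm : m ≤ w.length) (hhm : h + p ≤ m)
    (hper : HasAbelianPeriodEmptyTail (w.take m) h p) :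
    ∃ us : List (List α),
      w.take m = w.take h ++ us.flatten ∧
      us.length * p = m - h ∧
      (∀ v ∈ us, v.length = p) ∧
      (∀ v ∈ us, ∀ a, v.count a = ((w.drop h).take p).count a) ∧
      (∀ a, (w.take h).count a ≤ ((w.drop h).take p).count a) := by
  obtain ⟨u0, us, heq, hu0, hne, hlen, hcnt, hcont⟩ := hper
  have htm : (w.take m).length = m := by simp [hm]
  -- u0 = w.take h
  have hu0eq : u0 = w.take h := by
    have h1 : (w.take m).take h = u0 := by rw [heq, ← hu0, List.take_left]
    rw [← h1, List.take_take, min_eq_left (le_trans (Nat.le_add_right h p) hhm)]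
  -- flatten length
  have hflen : us.flatten.length = us.length * p := by
    rw [List.length_flatten]
    have : ∀ x ∈ us.map List.length, x = p := by
      intro x hx; obtain ⟨v, hv, rfl⟩ := List.mem_map.1 hx; exact hlen v hv
    rw [List.sum_eq_card_nsmul _ p this]; simp [mul_comm]
  have hlen2 : us.length * p = m - h := by
    have := congrArg List.length heq
    simp [htm, hu0, hflen] at this; omega
  -- first block
  obtain ⟨b, rest, rfl⟩ : ∃ b rest, us = b :: rest := by
    cases us with
    | nil => exact absurd rfl hne
    | cons b rest => exact ⟨b, rest, rfl⟩
  have hbl : b.length = p := hlen b (List.mem_cons_self ..)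
  have hbeq : b = (w.drop h).take p := by
    have h1 : ((w.take m).drop h).take p = b := by
      rw [heq, ← hu0, List.drop_left]
      simp only [List.flatten_cons, ← List.append_assoc]
      rw [← hbl, List.take_left' (by simp)]
    rw [← h1, List.drop_take, List.take_take,
      min_eq_left (by omega)]
  have hbc : ∀ a, b.count a = ((w.drop h).take p).count a := fun a => by rw [hbeq]
  refine ⟨b :: rest, by rwa [hu0eq] at heq, hlen2, hlen, ?_, ?_⟩
  · intro v hv a
    rw [← hbc a]; exact hcnt v hv b (List.mem_cons_self ..) a
  · intro a
    rw [← hbc a, ← hu0eq]; exact hcont b (List.mem_cons_self ..) a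

lemma abelian_aux_count {α : Type*} [DecidableEq α] (w : List α) (h p m : ℕ)
    (hp0 : 0 < p) (hm : m ≤ w.length) (hhm : h + p ≤ m)
    (hper : HasAbelianPeriodEmptyTail (w.take m) h p) :
    ∀ a, (w.take m).count a =
      (w.take h).count a + ((m - h) / p) * ((w.drop h).take p).count a := by
  obtain ⟨us, heq, hlen2, hlen, hcnt, -⟩ := abelian_aux w h p m hp0 hm hhm hper
  intro a
  have hdiv : (m - h) / p = us.length := by rw [← hlen2, Nat.mul_div_cancel _ hp0]
  have hfc : us.flatten.count a = us.length * ((w.drop h).take p).count a := by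
    rw [List.count_flatten]
    have : ∀ x ∈ us.map (List.count a), x = ((w.drop h).take p).count a := by
      intro x hx; obtain ⟨v, hv, rfl⟩ := List.mem_map.1 hx; exact hcnt v hv a
    rw [List.sum_eq_card_nsmul _ _ this]; simp [mul_comm]
  rw [heq, List.count_append, hfc, hdiv]

theorem abelian_period_extend_iff_select {α : Type*} [DecidableEq α]
    (w : List α) (n h p k i : ℕ) (hn : w.length = n)
    (hi : i = h + k * p) (hk : 0 < k) (hhp : h < p) (hip : i + p ≤ n)
    (hper : HasAbelianPeriodEmptyTail (w.take i) h p) :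
    HasAbelianPeriodEmptyTail (w.take (i + p)) h p ↔
      ∀ a : α,
        (w.take h).count a + (1 + i / p) * (((w.drop h).take p).count a) ≤
          (w.take (i + p)).count a := by
  have hp0 : 0 < p := by omega
  have hkp : p ≤ k * p := Nat.le_mul_of_pos_left p hk
  have hhm : h + p ≤ i := by omega
  have hiw : i ≤ w.length := by omega
  have hipw : i + p ≤ w.length := by omega
  have hdivi : i / p = k := by
    rw [hi, Nat.add_mul_div_right _ _ hp0, Nat.div_eq_of_lt hhp]; omega
  have hcnti := abelian_aux_count w h p i hp0 hiw hhm hper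
  have hsplit : w.take (i + p) = w.take i ++ (w.drop i).take p := List.take_add ..
  have hclen : ((w.drop i).take p).length = p := by
    rw [List.length_take, List.length_drop]; omega
  have hih : (i - h) / p = k := by rw [hi]; simp [Nat.mul_div_cancel _ hp0]
  constructor
  · intro hper'
    have hcnt' := abelian_aux_count w h p (i + p) hp0 hipw (by omega) hper'
    intro a
    rw [hcnt' a]
    have : (i + p - h) / p = k + 1 := by
      have : i + p - h = (k + 1) * p := by rw [hi]; ring_nf; omega
      rw [this, Nat.mul_div_cancel _ hp0]
    rw [this, hdivi]; ring_nf; omega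
  · intro hge
    obtain ⟨us, heq, hlen2, hlen, hcnt, hcont⟩ := abelian_aux w h p i hp0 hiw hhm hper
    set c := (w.drop i).take p with hc
    -- P a ≤ c.count a
    have hPle : ∀ a, ((w.drop h).take p).count a ≤ c.count a := by
      intro a
      have := hge a
      rw [hsplit, List.count_append, hcnti a, hdivi, hih] at this
      nlinarith
    -- hence equality via multisets
    have hPeq : ∀ a, c.count a = ((w.drop h).take p).count a := by
      have hmle : ((w.drop h).take p : Multiset α) ≤ (c : Multiset α) := by
        rw [Multiset.le_iff_count]
        intro a; simpa using hPle a
      have hcard : Multiset.card (c : Multiset α) ≤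
          Multiset.card (((w.drop h).take p : List α) : Multiset α) := by
        simp [hclen]
        omega
      have := Multiset.eq_of_le_of_card_le hmle hcard
      intro a
      have := congrArg (Multiset.count a) this
      simpa using this.symm
    refine ⟨w.take h, us ++ [c], ?_, ?_, by simp, ?_, ?_, ?_⟩
    · rw [hsplit, heq]; simp [hc]
    · rw [List.length_take]; omega
    · intro v hv
      rcases List.mem_append.1 hv with hv | hv
      · exact hlen v hv
      · simp at hv; subst hv; exact hclen
    · intro v hv v' hv' a
      have key : ∀ u ∈ us ++ [c], u.count a = ((w.drop h).take p).count a := by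
        intro u hu
        rcases List.mem_append.1 hu with hu | hu
        · exact hcnt u hu a
        · simp at hu; subst hu; exact hPeq a
      rw [key v hv, key v' hv']
    · intro v hv a
      rcases List.mem_append.1 hv with hv | hv
      · exact le_trans (hcont a) (le_of_eq (hcnt v hv a).symm)
      · simp at hv; subst hv; exact le_trans (hcont a) (le_of_eq (hPeq a).symm)
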